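/- arXiv:math/0607707 — 3 statements merged into one kernel-verified Lean document; each statement's English description precedes it below -/
import Mathlib

section
/- Let σ, k, ω > 0 and for λ > 0 define C_λ(t) := σ²(t + (e^{-λt} − 1)/λ). Then each integral ∫₀^∞ sin(ωt) e^{-(1/2)k² C_λ(t)} dt converges absolutely, and as λ → ∞ it converges to ∫₀^∞ sin(ωt) e^{-(1/2)k²σ² t} dt = ω / ((1/4)k⁴σ⁴ + ω²). -/
open MeasureTheory Real Filter

open Topology

lemma sinexp_integrableOn (ω b : ℝ) (hb : 0 < b) :
    IntegrableOn (fun t => sin (ω*t) * exp (-b*t)) (Set.Ioi (0:ℝ)) := by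
  apply (exp_neg_integrableOn_Ioi 0 hb).mono'
  · exact (Continuous.mul (by continuity) (by continuity)).aestronglyMeasurable
  · filter_upwards with t
    rw [norm_mul, Real.norm_eq_abs, Real.norm_eq_abs, Real.abs_exp]
    calc |sin (ω*t)| * exp (-b*t) ≤ 1 * exp (-b*t) := by
          gcongr; exact abs_sin_le_one _
      _ = exp (-b*t) := one_mul _

lemma sinexp_integral (ω b : ℝ) (hb : 0 < b) (hω : 0 < ω) :
    ∫ t in Set.Ioi (0:ℝ), sin (ω*t) * exp (-b*t) = ω / (b^2 + ω^2) := by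
  have hden : (0:ℝ) < b^2 + ω^2 := by positivity
  set F : ℝ → ℝ := fun t => -(exp (-b*t) * (b * sin (ω*t) + ω * cos (ω*t))) / (b^2 + ω^2)
    with hF
  have hderiv : ∀ t ∈ Set.Ici (0:ℝ), HasDerivAt F (sin (ω*t) * exp (-b*t)) t := by
    intro t _
    have he : HasDerivAt (fun t => exp (-b*t)) (exp (-b*t) * (-b)) t := by
      simpa using ((hasDerivAt_id t).const_mul (-b)).exp
    have hs : HasDerivAt (fun t => sin (ω*t)) (cos (ω*t) * ω) t := by
      simpa using ((hasDerivAt_id t).const_mul ω).sin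
    have hc : HasDerivAt (fun t => cos (ω*t)) (-sin (ω*t) * ω) t := by
      simpa using ((hasDerivAt_id t).const_mul ω).cos
    have H := ((he.mul ((hs.const_mul b).add (hc.const_mul ω))).neg).div_const (b^2+ω^2)
    refine H.congr_deriv ?_
    simp only [Pi.add_apply]
    rw [div_eq_iff hden.ne']
    ring
  have htend : Tendsto F atTop (𝓝 0) := by
    have hbt : Tendsto (fun t:ℝ => b*t) atTop atTop := tendsto_id.const_mul_atTop hb
    have h0 : Tendsto (fun t:ℝ => exp (-b*t)) atTop (𝓝 0) := by
      have := Real.tendsto_exp_neg_atTop_nhds_zero.comp hbt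
      simpa only [Function.comp_def, neg_mul] using this
    have h1 : Tendsto (fun t : ℝ => exp (-b*t) * ((b+ω)/(b^2+ω^2))) atTop (𝓝 0) := by
      simpa using h0.mul_const ((b+ω)/(b^2+ω^2))
    apply squeeze_zero_norm _ h1
    intro t
    have habs : |b * sin (ω*t) + ω * cos (ω*t)| ≤ b + ω := by
      calc |b * sin (ω*t) + ω * cos (ω*t)| ≤ |b * sin (ω*t)| + |ω * cos (ω*t)| := abs_add_le _ _
        _ ≤ b * 1 + ω * 1 := by
            rw [abs_mul, abs_mul, abs_of_pos hb, abs_of_pos hω]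
            gcongr
            exacts [abs_sin_le_one _, abs_cos_le_one _]
        _ = b + ω := by ring
    have : ‖F t‖ = exp (-b*t) * |b * sin (ω*t) + ω * cos (ω*t)| / (b^2+ω^2) := by
      rw [hF, Real.norm_eq_abs, abs_div, abs_neg, abs_mul, Real.abs_exp, abs_of_pos hden]
    rw [this, mul_div_assoc]
    gcongr
  have hres := integral_Ioi_of_hasDerivAt_of_tendsto' hderiv (sinexp_integrableOn ω b hb) htend
  rw [hres, hF]
  simp [Real.exp_zero, Real.sin_zero, Real.cos_zero]
  ring

/-- **Zero-correlation-time limit of the eddy Stokes' drift integral.**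
Let `σ, k, ω > 0` and for `lam > 0` define `C lam t := σ^2*(t + (exp (-lam*t) - 1)/lam)`.
Then each integral `∫₀^∞ sin (ω*t) * exp (-(1/2)*k^2 * C lam t) dt` converges
absolutely, and as `lam → ∞` it converges to
`∫₀^∞ sin (ω*t) * exp (-(1/2)*k^2*σ^2*t) dt = ω / ((1/4)*k^4*σ^4 + ω^2)`. -/
theorem eddy_drift_integral_brownian_limit
    (σ k ω : ℝ) (hσ : 0 < σ) (hk : 0 < k) (hω : 0 < ω)
    (C : ℝ → ℝ → ℝ)
    (hC : ∀ lam t, 0 < lam → 0 ≤ t →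
      C lam t = σ^2 * (t + (exp (-lam * t) - 1) / lam)) :
    (∀ lam, 0 < lam →
      IntegrableOn (fun t => sin (ω * t) * exp (-(1/2) * k^2 * C lam t)) (Set.Ici 0)) ∧
    Tendsto
      (fun lam => ∫ t in Set.Ici (0:ℝ), sin (ω * t) * exp (-(1/2) * k^2 * C lam t))
      atTop
      (nhds (∫ t in Set.Ici (0:ℝ), sin (ω * t) * exp (-(1/2) * k^2 * σ^2 * t))) ∧
    (∫ t in Set.Ici (0:ℝ), sin (ω * t) * exp (-(1/2) * k^2 * σ^2 * t))
      = ω / ((1/4) * k^4 * σ^4 + ω^2) := by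
  set b : ℝ := (1/2) * k^2 * σ^2 with hb_def
  have hb : 0 < b := by positivity
  set G : ℝ → ℝ → ℝ :=
    fun lam t => sin (ω*t) * exp (-(1/2)*k^2*(σ^2*(t + (exp (-lam*t)-1)/lam))) with hG
  have hGcont : ∀ lam : ℝ, Continuous (G lam) := by
    intro lam
    apply Continuous.mul (by continuity)
    apply Real.continuous_exp.comp
    apply Continuous.mul continuous_const
    apply Continuous.mul continuous_const
    exact continuous_id.add (((Real.continuous_exp.comp (by continuity)).sub
      continuous_const).div_const lam)
  have hbound : ∀ lam t : ℝ, 0 < lam → 0 ≤ t →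
      ‖G lam t‖ ≤ exp (b/lam) * exp (-b*t) := by
    intro lam t hlam ht
    simp only [hG, norm_mul, Real.norm_eq_abs, Real.abs_exp]
    calc |sin (ω*t)| * exp (-(1/2)*k^2*(σ^2*(t + (exp (-lam*t)-1)/lam)))
        ≤ 1 * exp (-(1/2)*k^2*(σ^2*(t + (exp (-lam*t)-1)/lam))) := by
          gcongr; exact abs_sin_le_one _
      _ ≤ exp (b/lam) * exp (-b*t) := by
          rw [one_mul, ← Real.exp_add]
          apply Real.exp_le_exp.mpr
          have h1 : (-1:ℝ) ≤ exp (-lam*t) - 1 := by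
            have := Real.exp_nonneg (-lam*t); linarith
          have hr : (-1:ℝ)/lam ≤ (exp (-lam*t)-1)/lam := by gcongr
          rw [neg_div] at hr
          have h3 := mul_le_mul_of_nonneg_left hr hb.le
          have h4 : b * -(1/lam) = -(b * (1/lam)) := by ring
          have h5 : -b * ((exp (-lam*t)-1)/lam) = -(b * ((exp (-lam*t)-1)/lam)) := by ring
          have h2 : -b * ((exp (-lam*t)-1)/lam) ≤ b * (1/lam) := by linarith
          have heq : -(1/2)*k^2*(σ^2*(t + (exp (-lam*t)-1)/lam))
              = -b*t + (-b * ((exp (-lam*t)-1)/lam)) := by rw [hb_def]; ring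
          have hbl : b/lam + -b*t = b * (1/lam) + -b*t := by ring
          rw [heq, hbl]
          linarith
  have hGint : ∀ lam : ℝ, 0 < lam → IntegrableOn (G lam) (Set.Ici 0) := by
    intro lam hlam
    rw [integrableOn_Ici_iff_integrableOn_Ioi]
    apply ((exp_neg_integrableOn_Ioi 0 hb).const_mul (exp (b/lam))).mono'
      ((hGcont lam).aestronglyMeasurable)
    filter_upwards [ae_restrict_mem measurableSet_Ioi] with t ht
    exact hbound lam t hlam (le_of_lt ht)
  have hfeq : ∀ lam : ℝ, 0 < lam →
      Set.EqOn (fun t => sin (ω*t) * exp (-(1/2)*k^2*C lam t)) (G lam) (Set.Ici 0) := by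
    intro lam hlam t ht
    simp only [hG]
    rw [hC lam t hlam ht]
  have hval : (∫ t in Set.Ici (0:ℝ), sin (ω*t) * exp (-(1/2)*k^2*σ^2*t))
      = ω / ((1/4)*k^4*σ^4 + ω^2) := by
    rw [MeasureTheory.integral_Ici_eq_integral_Ioi]
    have h1 : ∀ t:ℝ, -(1/2)*k^2*σ^2*t = -b*t := fun t => by rw [hb_def]; ring
    simp_rw [h1]
    rw [sinexp_integral ω b hb hω]
    have h2 : b^2 + ω^2 = (1/4)*k^4*σ^4 + ω^2 := by rw [hb_def]; ring
    rw [h2]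
  have hTend : Tendsto (fun lam => ∫ t in Set.Ici (0:ℝ), G lam t) atTop
      (𝓝 (∫ t in Set.Ici (0:ℝ), sin (ω*t) * exp (-(1/2)*k^2*σ^2*t))) := by
    apply tendsto_integral_filter_of_dominated_convergence (fun t => exp b * exp (-b*t))
    · filter_upwards with lam
      exact (hGcont lam).aestronglyMeasurable
    · filter_upwards [eventually_ge_atTop 1] with lam hlam
      filter_upwards [ae_restrict_mem measurableSet_Ici] with t ht
      calc ‖G lam t‖ ≤ exp (b/lam) * exp (-b*t) :=
            hbound lam t (lt_of_lt_of_le one_pos hlam) ht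
        _ ≤ exp b * exp (-b*t) := by
            gcongr
            · exact div_le_self hb.le hlam
    · exact (integrableOn_Ici_iff_integrableOn_Ioi).mpr
        ((exp_neg_integrableOn_Ioi 0 hb).const_mul (exp b))
    · filter_upwards [ae_restrict_mem measurableSet_Ici] with t ht
      have hr : Tendsto (fun lam : ℝ => (exp (-lam*t)-1)/lam) atTop (𝓝 0) := by
        have hlow : ∀ᶠ lam : ℝ in atTop, -(lam⁻¹) ≤ (exp (-lam*t)-1)/lam := by
          filter_upwards [eventually_gt_atTop 0] with lam hlam
          have h1 : (-1:ℝ) ≤ exp (-lam*t) - 1 := by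
            have := Real.exp_nonneg (-lam*t); linarith
          rw [show -(lam⁻¹) = (-1:ℝ)/lam by ring]
          gcongr
        have hhigh : ∀ᶠ lam : ℝ in atTop, (exp (-lam*t)-1)/lam ≤ 0 := by
          filter_upwards [eventually_gt_atTop 0] with lam hlam
          apply div_nonpos_of_nonpos_of_nonneg _ hlam.le
          have : exp (-lam*t) ≤ 1 := Real.exp_le_one_iff.mpr (by
            have := mul_nonneg hlam.le ht
            linarith)
          linarith
        have hneg : Tendsto (fun lam : ℝ => -(lam⁻¹)) atTop (𝓝 0) := by
          simpa using (tendsto_inv_atTop_zero : Tendsto (fun x:ℝ => x⁻¹) atTop (𝓝 0)).neg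
        exact tendsto_of_tendsto_of_tendsto_of_le_of_le' hneg tendsto_const_nhds hlow hhigh
      have hcont : Continuous (fun r : ℝ => sin (ω*t) * exp (-(1/2)*k^2*(σ^2*(t + r)))) :=
        continuous_const.mul (Real.continuous_exp.comp (continuous_const.mul
          (continuous_const.mul (continuous_const.add continuous_id))))
      have h2 := (hcont.tendsto 0).comp hr
      simp only [Function.comp_def, add_zero] at h2
      have e : -(1/2)*k^2*(σ^2*t) = -(1/2)*k^2*σ^2*t := by ring
      rw [e] at h2
      exact h2
  refine ⟨fun lam hlam =>
    (hGint lam hlam).congr_fun (hfeq lam hlam).symm measurableSet_Ici, ?_, hval⟩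
  apply hTend.congr'
  filter_upwards [eventually_gt_atTop 0] with lam hlam
  exact (setIntegral_congr_fun measurableSet_Ici (hfeq lam hlam)).symm
end

section
/- Let g : ℝ → ℝ be an even, integrable function. Then (1/T) ∫₀^T ∫₀^T g(α − β) dα dβ → ∫_{-∞}^{∞} g(t) dt = 2 ∫₀^∞ g(t) dt as T → ∞. -/
open MeasureTheory Real Filter Set Topology

lemma cesaro_integral {f : ℝ → ℝ} (hf : Continuous f) {L : ℝ}
    (hL : Tendsto f atTop (𝓝 L)) :
    Tendsto (fun T : ℝ => (1 / T) * ∫ x in (0:ℝ)..T, f x) atTop (𝓝 L) := by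
  rw [Metric.tendsto_atTop]
  intro ε hε
  obtain ⟨A₀, hA₀⟩ := (Metric.tendsto_atTop.1 hL) (ε / 2) (half_pos hε)
  set A := max A₀ 0 with hA
  have hA0 : 0 ≤ A := le_max_right _ _
  have hAbound : ∀ x ≥ A, |f x - L| ≤ ε / 2 := fun x hx => le_of_lt (by
    simpa [Real.dist_eq] using hA₀ x (le_trans (le_max_left _ _) hx))
  set C := |∫ x in (0:ℝ)..A, (f x - L)| with hCdef
  have hC0 : 0 ≤ C := abs_nonneg _
  refine ⟨max (A + 1) (2 * C / ε + 1), fun T hT => ?_⟩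
  have hTA : A + 1 ≤ T := le_trans (le_max_left _ _) hT
  have hTC : 2 * C / ε + 1 ≤ T := le_trans (le_max_right _ _) hT
  have hTpos : 0 < T := by linarith
  have hintsub : ∀ a b : ℝ, IntervalIntegrable (fun x => f x - L) volume a b :=
    fun a b => (hf.sub continuous_const).intervalIntegrable a b
  have key : (1 / T) * (∫ x in (0:ℝ)..T, f x) - L
      = (1 / T) * ∫ x in (0:ℝ)..T, (f x - L) := by
    rw [intervalIntegral.integral_sub (hf.intervalIntegrable _ _) intervalIntegrable_const,
      intervalIntegral.integral_const]
    field_simp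
    simp only [sub_zero, smul_eq_mul]
  rw [Real.dist_eq, key]
  have split : (∫ x in (0:ℝ)..T, (f x - L)) =
      (∫ x in (0:ℝ)..A, (f x - L)) + ∫ x in A..T, (f x - L) :=
    (intervalIntegral.integral_add_adjacent_intervals (hintsub 0 A) (hintsub A T)).symm
  have hb : |∫ x in A..T, (f x - L)| ≤ ε / 2 * |T - A| := by
    have h := intervalIntegral.norm_integral_le_of_norm_le_const (C := ε / 2)
      (f := fun x => f x - L) (a := A) (b := T) ?_
    · simpa [Real.norm_eq_abs] using h
    · intro x hx
      rw [Set.uIoc_of_le (by linarith : A ≤ T)] at hx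
      simpa [Real.norm_eq_abs] using hAbound x hx.1.le
  have habs : |T - A| = T - A := abs_of_nonneg (by linarith)
  have hbound : |∫ x in (0:ℝ)..T, (f x - L)| ≤ C + ε / 2 * (T - A) := by
    rw [split]
    calc _ ≤ C + |∫ x in A..T, (f x - L)| := abs_add_le _ _
      _ ≤ C + ε / 2 * (T - A) := by rw [habs] at hb; linarith
  have : |(1 / T) * ∫ x in (0:ℝ)..T, (f x - L)|
      = (1 / T) * |∫ x in (0:ℝ)..T, (f x - L)| := by
    rw [abs_mul, abs_of_pos (by positivity : (0:ℝ) < 1 / T)]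
  rw [this]
  have h1 : (1 / T) * |∫ x in (0:ℝ)..T, (f x - L)| ≤ (1 / T) * (C + ε / 2 * (T - A)) := by
    apply mul_le_mul_of_nonneg_left hbound (by positivity)
  have h2 : (1 / T) * (C + ε / 2 * (T - A)) < ε := by
    rw [div_mul_eq_mul_div, one_mul, div_lt_iff₀ hTpos]
    have h4 : ε * (2 * C / ε + 1) ≤ ε * T := mul_le_mul_of_nonneg_left hTC hε.le
    have h5 : ε * (2 * C / ε + 1) = 2 * C + ε := by field_simp
    nlinarith [mul_nonneg hε.le hA0]
  linarith

/-- **Cesàro lemma for double integrals of a difference kernel.**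
Let `g : ℝ → ℝ` be an even, integrable function.  Then
`(1/T) * ∫₀^T ∫₀^T g (α - β) dα dβ → ∫_{-∞}^∞ g t dt = 2 * ∫₀^∞ g t dt`
as `T → ∞`. -/
theorem cesaro_double_integral_difference_kernel
    (g : ℝ → ℝ) (heven : ∀ t, g (-t) = g t) (hint : Integrable g) :
    Tendsto
      (fun T : ℝ => (1 / T) * ∫ β in (0:ℝ)..T, ∫ α in (0:ℝ)..T, g (α - β))
      atTop (nhds (∫ t, g t)) ∧
    (∫ t, g t) = 2 * ∫ t in Set.Ici (0:ℝ), g t := by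
  set F : ℝ → ℝ := fun x => ∫ t in Iic x, g t with hF
  have hIic : ∀ x : ℝ, IntegrableOn g (Iic x) := fun x => hint.integrableOn
  have hFval : ∀ a b : ℝ, F b - F a = ∫ t in a..b, g t := fun a b =>
    intervalIntegral.integral_Iic_sub_Iic (hIic a) (hIic b)
  have hFeq : ∀ x : ℝ, F x = F 0 + ∫ t in (0:ℝ)..x, g t := by
    intro x; rw [← hFval 0 x]; ring
  have hFcont : Continuous F := by
    have h := hint.continuous_primitive 0
    have : Continuous fun x => F 0 + ∫ t in (0:ℝ)..x, g t := continuous_const.add h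
    exact this.congr fun x => (hFeq x).symm
  have hFtop : Tendsto F atTop (𝓝 (∫ t, g t)) := by
    have h1 : Tendsto (fun x : ℝ => ∫ t in (0:ℝ)..x, g t) atTop
        (𝓝 (∫ t in Ioi (0:ℝ), g t)) :=
      intervalIntegral_tendsto_integral_Ioi 0 hint.integrableOn tendsto_id
    have h2 := h1.const_add (F 0)
    have h3 : F 0 + ∫ t in Ioi (0:ℝ), g t = ∫ t, g t :=
      intervalIntegral.integral_Iic_add_Ioi (hIic 0) hint.integrableOn
    rw [h3] at h2
    exact h2.congr fun x => (hFeq x).symm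
  have hFbot : Tendsto F atBot (𝓝 0) := by
    have h1 : Tendsto (fun x : ℝ => ∫ t in x..(0:ℝ), g t) atBot
        (𝓝 (∫ t in Iic (0:ℝ), g t)) :=
      intervalIntegral_tendsto_integral_Iic 0 (hIic 0) tendsto_id
    have h2 := (h1.const_sub (F 0))
    have : Tendsto F atBot (𝓝 (F 0 - ∫ t in Iic (0:ℝ), g t)) := by
      refine h2.congr fun x => ?_
      rw [← hFval x 0]; ring
    simpa [hF] using this
  set G : ℝ → ℝ := fun x => F (-x) with hG
  have hGcont : Continuous G := hFcont.comp continuous_neg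
  have hGtop : Tendsto G atTop (𝓝 0) := hFbot.comp tendsto_neg_atTop_atBot
  have hinner : ∀ T β : ℝ, (∫ α in (0:ℝ)..T, g (α - β)) = F (T - β) - F (-β) := by
    intro T β
    rw [intervalIntegral.integral_comp_sub_right (fun u => g u) β, ← hFval (0 - β) (T - β),
      zero_sub]
  have hdouble : ∀ T : ℝ,
      (∫ β in (0:ℝ)..T, ∫ α in (0:ℝ)..T, g (α - β))
        = (∫ x in (0:ℝ)..T, F x) - ∫ x in (0:ℝ)..T, G x := by
    intro T
    have e1 : (∫ β in (0:ℝ)..T, ∫ α in (0:ℝ)..T, g (α - β))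
        = ∫ β in (0:ℝ)..T, (F (T - β) - F (-β)) := by
      apply intervalIntegral.integral_congr
      intro β _
      exact hinner T β
    have c1 : Continuous fun β : ℝ => F (T - β) := hFcont.comp (continuous_sub_left T)
    have c2 : Continuous fun β : ℝ => F (-β) := hFcont.comp continuous_neg
    rw [e1, intervalIntegral.integral_sub (c1.intervalIntegrable _ _)
      (c2.intervalIntegrable _ _)]
    congr 1
    · rw [intervalIntegral.integral_comp_sub_left F T]
      simp
  have main : Tendsto
      (fun T : ℝ => (1 / T) * ∫ β in (0:ℝ)..T, ∫ α in (0:ℝ)..T, g (α - β))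
      atTop (𝓝 (∫ t, g t)) := by
    have h1 := cesaro_integral hFcont hFtop
    have h2 := cesaro_integral hGcont hGtop
    have h3 := h1.sub h2
    rw [sub_zero] at h3
    refine h3.congr fun T => ?_
    rw [hdouble T]; ring
  refine ⟨main, ?_⟩
  have e2 : (∫ t in Ioi (0:ℝ), g t) = ∫ t in Ici (0:ℝ), g t :=
    (integral_Ici_eq_integral_Ioi).symm
  have e1 : (∫ t in Iic (0:ℝ), g t) = ∫ t in Ici (0:ℝ), g t := by
    have h := integral_comp_neg_Iic (0:ℝ) g
    simp only [heven, neg_zero] at h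
    first
    | exact h
    | exact h.trans e2
  rw [← intervalIntegral.integral_Iic_add_Ioi (hIic 0) hint.integrableOn, e1, e2]
  ring
end

section
/- Let σ, k, ω > 0 and for λ > 0 define C_λ(t) := σ²(t + (e^{-λt} − 1)/λ). Then the double integral V(λ) := λ ∫₀^∞ ∫₀^∞ e^{-λβ − (1/2)k² C_λ(α + β)} sin(ω(α + β)) dβ dα converges absolutely for each λ > 0, and V(λ) → ∫₀^∞ e^{-(1/2)k²σ² α} sin(ωα) dα = ω/((1/4)k⁴σ⁴ + ω²) as λ → ∞. -/
open MeasureTheory Real Filter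

namespace InertiaDriftAux

noncomputable def g (c ω lam t : ℝ) : ℝ :=
  Real.exp (-(c * (t + (Real.exp (-(lam * t)) - 1) / lam))) * Real.sin (ω * t)

noncomputable def psi (c ω lam t : ℝ) : ℝ := Real.exp (-(lam * t)) * g c ω lam t

lemma g_continuous (c ω lam : ℝ) : Continuous (g c ω lam) := by
  unfold g; fun_prop

lemma psi_continuous (c ω lam : ℝ) : Continuous (psi c ω lam) := by
  unfold psi; exact (by fun_prop : Continuous fun t : ℝ => Real.exp (-(lam*t))).mul (g_continuous c ω lam)

lemma abs_g_le {c lam : ℝ} (hc : 0 < c) (hlam : 0 < lam) (ω t : ℝ) :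
    |g c ω lam t| ≤ Real.exp (c / lam) * Real.exp (-(c * t)) := by
  have hE : (0:ℝ) ≤ Real.exp (-(lam * t)) := (Real.exp_pos _).le
  have h1 : |Real.sin (ω * t)| ≤ 1 := abs_sin_le_one _
  have harg : -(c * (t + (Real.exp (-(lam * t)) - 1) / lam)) ≤ c / lam + -(c * t) := by
    have h2 : (-(c * (Real.exp (-(lam * t)) - 1))) / lam ≤ c / lam :=
      (div_le_div_iff_of_pos_right hlam).mpr (by nlinarith)
    have h3 : -(c * (t + (Real.exp (-(lam * t)) - 1) / lam))
        = (-(c * (Real.exp (-(lam * t)) - 1))) / lam + -(c * t) := by ring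
    linarith
  calc |g c ω lam t| = Real.exp (-(c * (t + (Real.exp (-(lam*t)) - 1) / lam))) * |Real.sin (ω*t)| := by
        rw [g, abs_mul, abs_of_pos (Real.exp_pos _)]
    _ ≤ Real.exp (-(c * (t + (Real.exp (-(lam*t)) - 1) / lam))) * 1 :=
        mul_le_mul_of_nonneg_left h1 (Real.exp_pos _).le
    _ ≤ Real.exp (c / lam + -(c * t)) := by
        rw [mul_one]; exact Real.exp_le_exp.mpr harg
    _ = Real.exp (c / lam) * Real.exp (-(c * t)) := Real.exp_add _ _

lemma expIntegrable {a : ℝ} (ha : 0 < a) :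
    IntegrableOn (fun t => Real.exp (-(a * t))) (Set.Ici (0:ℝ)) := by
  rw [integrableOn_Ici_iff_integrableOn_Ioi]
  simpa [neg_mul] using exp_neg_integrableOn_Ioi 0 ha

lemma integrable2 {c lam : ℝ} (hc : 0 < c) (hlam : 0 < lam) (ω : ℝ) :
    IntegrableOn (fun p : ℝ × ℝ => Real.exp (-(lam * p.2)) * g c ω lam (p.1 + p.2))
      (Set.Ici 0 ×ˢ Set.Ici 0) := by
  have h1 : IntegrableOn (fun α => Real.exp (c / lam) * Real.exp (-(c * α))) (Set.Ici (0:ℝ)) :=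
    (expIntegrable hc).const_mul _
  have h2 : IntegrableOn (fun β => Real.exp (-((lam + c) * β))) (Set.Ici (0:ℝ)) :=
    expIntegrable (by linarith)
  have hb : IntegrableOn
      (fun p : ℝ × ℝ => (Real.exp (c / lam) * Real.exp (-(c * p.1))) * Real.exp (-((lam + c) * p.2)))
      (Set.Ici 0 ×ˢ Set.Ici 0) := by
    rw [IntegrableOn, Measure.volume_eq_prod, ← Measure.prod_restrict]
    exact h1.mul_prod h2
  refine hb.integrable.mono' ?_ ?_
  · exact (((Real.continuous_exp.comp (by fun_prop)).mul
      ((g_continuous c ω lam).comp (by fun_prop))).aestronglyMeasurable).restrict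
  · rw [ae_restrict_iff' (measurableSet_Ici.prod measurableSet_Ici)]
    filter_upwards with p hp
    obtain ⟨hp1, hp2⟩ := hp
    have := abs_g_le hc hlam ω (p.1 + p.2)
    calc ‖Real.exp (-(lam * p.2)) * g c ω lam (p.1 + p.2)‖
        = Real.exp (-(lam * p.2)) * |g c ω lam (p.1 + p.2)| := by
          rw [norm_mul, Real.norm_eq_abs, Real.norm_eq_abs, abs_of_pos (Real.exp_pos _)]
      _ ≤ Real.exp (-(lam * p.2)) * (Real.exp (c / lam) * Real.exp (-(c * (p.1 + p.2)))) :=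
          mul_le_mul_of_nonneg_left this (Real.exp_pos _).le
      _ = (Real.exp (c / lam) * Real.exp (-(c * p.1))) * Real.exp (-((lam + c) * p.2)) := by
          simp only [← Real.exp_add]; congr 1; ring

lemma key {c lam : ℝ} (hc : 0 < c) (hlam : 0 < lam) (ω : ℝ) :
    lam * ∫ α in Set.Ici (0:ℝ), ∫ β in Set.Ici (0:ℝ),
        Real.exp (-(lam * β)) * g c ω lam (α + β)
      = ∫ t in Set.Ici (0:ℝ), g c ω lam t * (1 - Real.exp (-(lam * t))) := by
  -- Step 1: inner integral via translation
  have inner_eq : ∀ α : ℝ,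
      (∫ β in Set.Ici (0:ℝ), Real.exp (-(lam * β)) * g c ω lam (α + β))
        = Real.exp (lam * α) * ∫ t in Set.Ici α, psi c ω lam t := by
    intro α
    have h1 : ∀ β : ℝ, Real.exp (-(lam * β)) * g c ω lam (α + β)
        = Real.exp (lam * α) * psi c ω lam (α + β) := by
      intro β
      rw [psi, ← mul_assoc, ← Real.exp_add]
      congr 2
      ring
    simp_rw [h1]
    rw [integral_const_mul]
    congr 1
    rw [← integral_indicator measurableSet_Ici, ← integral_indicator measurableSet_Ici]
    have h2 : ∀ β : ℝ, (Set.Ici (0:ℝ)).indicator (fun b => psi c ω lam (α + b)) β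
        = (Set.Ici α).indicator (psi c ω lam) (β + α) := by
      intro β
      simp only [Set.indicator_apply, Set.mem_Ici, le_add_iff_nonneg_left]
      by_cases hβ : (0:ℝ) ≤ β <;> simp [hβ, add_comm]
    simp_rw [h2]
    exact integral_add_right_eq_self _ α
  simp_rw [inner_eq]
  -- Step 2: Fubini swap
  set H : ℝ → ℝ → ℝ := fun α t =>
    (Set.Ici (0:ℝ)).indicator (fun a => Real.exp (lam * a)) α
      * (Set.Ici α).indicator (psi c ω lam) t with hH
  have hHeq : (Function.uncurry H) =
      ({p : ℝ × ℝ | 0 ≤ p.1 ∧ p.1 ≤ p.2}).indicator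
        (fun p => Real.exp (lam * p.1) * psi c ω lam p.2) := by
    funext p
    rcases p with ⟨α, t⟩
    simp only [Function.uncurry, hH, Set.indicator_apply, Set.mem_Ici, Set.mem_setOf_eq]
    by_cases h1 : (0:ℝ) ≤ α <;> by_cases h2 : α ≤ t <;> simp [h1, h2]
  have hEmeas : MeasurableSet {p : ℝ × ℝ | 0 ≤ p.1 ∧ p.1 ≤ p.2} :=
    (measurableSet_le measurable_const measurable_fst).inter
      (measurableSet_le measurable_fst measurable_snd)
  have hHint : Integrable (Function.uncurry H) (volume : Measure (ℝ × ℝ)) := by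
    have hbint : Integrable (fun p : ℝ × ℝ =>
        Real.exp (c / lam) * ((Set.Ici (0:ℝ)).indicator (fun a => Real.exp (-(c/2 * a))) p.1
          * (Set.Ici (0:ℝ)).indicator (fun a => Real.exp (-(c/2 * a))) p.2)) := by
      have h1 : Integrable ((Set.Ici (0:ℝ)).indicator (fun a => Real.exp (-(c/2 * a)))) := by
        rw [integrable_indicator_iff measurableSet_Ici]
        exact expIntegrable (by linarith)
      rw [Measure.volume_eq_prod]
      exact (h1.mul_prod h1).const_mul _
    refine hbint.mono' ?_ ?_
    · rw [hHeq]
      refine AEStronglyMeasurable.indicator ?_ hEmeas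
      exact ((Real.continuous_exp.comp (by fun_prop)).mul
        ((psi_continuous c ω lam).comp continuous_snd)).aestronglyMeasurable
    · filter_upwards with p
      rw [hHeq]
      by_cases hp : p ∈ {p : ℝ × ℝ | 0 ≤ p.1 ∧ p.1 ≤ p.2}
      · have h1 : (0:ℝ) ≤ p.1 := hp.1
        have h2 : p.1 ≤ p.2 := hp.2
        rw [Set.indicator_of_mem hp]
        have hg := abs_g_le hc hlam ω p.2
        have key1 : Real.exp (lam * p.1) * (Real.exp (-(lam * p.2)) *
            (Real.exp (c / lam) * Real.exp (-(c * p.2))))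
            ≤ Real.exp (c / lam) * (Real.exp (-(c/2 * p.1)) * Real.exp (-(c/2 * p.2))) := by
          simp only [← Real.exp_add]
          apply Real.exp_le_exp.mpr
          nlinarith
        calc ‖Real.exp (lam * p.1) * psi c ω lam p.2‖
            = Real.exp (lam * p.1) * (Real.exp (-(lam * p.2)) * |g c ω lam p.2|) := by
              rw [norm_mul, Real.norm_eq_abs, Real.norm_eq_abs, abs_of_pos (Real.exp_pos _),
                psi, abs_mul, abs_of_pos (Real.exp_pos _)]
          _ ≤ Real.exp (lam * p.1) * (Real.exp (-(lam * p.2)) *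
                (Real.exp (c / lam) * Real.exp (-(c * p.2)))) := by
              apply mul_le_mul_of_nonneg_left _ (Real.exp_pos _).le
              exact mul_le_mul_of_nonneg_left hg (Real.exp_pos _).le
          _ ≤ Real.exp (c / lam) * (Real.exp (-(c/2 * p.1)) * Real.exp (-(c/2 * p.2))) := key1
          _ = Real.exp (c / lam) * ((Set.Ici (0:ℝ)).indicator (fun a => Real.exp (-(c/2 * a))) p.1
                * (Set.Ici (0:ℝ)).indicator (fun a => Real.exp (-(c/2 * a))) p.2) := by
              simp only [Set.indicator_apply, Set.mem_Ici, if_pos h1, if_pos (le_trans h1 h2)]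
      · rw [Set.indicator_of_notMem hp, norm_zero]
        apply mul_nonneg (Real.exp_pos _).le
        exact mul_nonneg (Set.indicator_nonneg (fun a _ => (Real.exp_pos _).le) _)
          (Set.indicator_nonneg (fun a _ => (Real.exp_pos _).le) _)
  have swap := integral_integral_swap (f := H) (by rwa [Measure.volume_eq_prod] at hHint)
  -- LHS of swap equals our iterated integral
  have hLHS : (∫ α : ℝ, ∫ t : ℝ, H α t)
      = ∫ α in Set.Ici (0:ℝ), Real.exp (lam * α) * ∫ t in Set.Ici α, psi c ω lam t := by
    rw [← integral_indicator measurableSet_Ici]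
    congr 1
    funext α
    by_cases hα : (0:ℝ) ≤ α
    · simp only [hH, Set.indicator_apply, Set.mem_Ici, if_pos hα]
      rw [integral_const_mul, ← integral_indicator measurableSet_Ici]
      simp only [Set.indicator_apply, Set.mem_Ici]
    · simp [hH, Set.indicator_apply, hα]
  -- value of the new inner integral
  have hIcc : ∀ t : ℝ, (∫ α in Set.Icc (0:ℝ) t, Real.exp (lam * α))
      = if 0 ≤ t then (Real.exp (lam * t) - 1) / lam else 0 := by
    intro t
    by_cases ht : (0:ℝ) ≤ t
    · rw [if_pos ht, integral_Icc_eq_integral_Ioc, ← intervalIntegral.integral_of_le ht,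
        intervalIntegral.integral_comp_mul_left (fun x => Real.exp x) hlam.ne']
      rw [integral_exp]
      simp only [smul_eq_mul, mul_zero, Real.exp_zero]
      field_simp
    · rw [if_neg ht, Set.Icc_eq_empty (by simpa using ht)]
      simp
  have hRHS : (∫ t : ℝ, ∫ α : ℝ, H α t)
      = ∫ t in Set.Ici (0:ℝ), (Real.exp (lam * t) - 1) / lam * psi c ω lam t := by
    rw [← integral_indicator measurableSet_Ici]
    congr 1
    funext t
    have hfun : ∀ α : ℝ, H α t
        = (Set.Icc (0:ℝ) t).indicator (fun a => Real.exp (lam * a)) α * psi c ω lam t := by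
      intro α
      simp only [hH, Set.indicator_apply, Set.mem_Ici, Set.mem_Icc]
      by_cases h1 : (0:ℝ) ≤ α <;> by_cases h2 : α ≤ t <;> simp [h1, h2]
    simp_rw [hfun]
    rw [integral_mul_const, integral_indicator measurableSet_Icc, hIcc t]
    simp only [Set.indicator_apply, Set.mem_Ici]
    by_cases ht : (0:ℝ) ≤ t
    · rw [if_pos ht, if_pos ht]
    · rw [if_neg ht, if_neg ht, zero_mul]
  rw [hLHS, hRHS] at swap
  rw [swap, ← integral_const_mul]
  apply setIntegral_congr_fun measurableSet_Ici
  intro t _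
  simp only
  rw [psi, Real.exp_neg]
  have h := Real.exp_pos (lam * t)
  field_simp

lemma limit {c : ℝ} (hc : 0 < c) (ω : ℝ) :
    Tendsto (fun lam => ∫ t in Set.Ici (0:ℝ), g c ω lam t * (1 - Real.exp (-(lam * t)))) atTop
      (nhds (∫ t in Set.Ici (0:ℝ), Real.exp (-(c * t)) * Real.sin (ω * t))) := by
  apply tendsto_integral_filter_of_dominated_convergence
    (bound := fun t => Real.exp c * Real.exp (-(c * t)))
  · filter_upwards with lam
    exact (((g_continuous c ω lam).mul (by fun_prop)).aestronglyMeasurable).restrict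
  · filter_upwards [eventually_ge_atTop (1:ℝ)] with lam hlam
    rw [ae_restrict_iff' measurableSet_Ici]
    filter_upwards with t ht
    have ht : (0:ℝ) ≤ t := ht
    have hlam0 : (0:ℝ) < lam := by linarith
    have hE : Real.exp (-(lam * t)) ≤ 1 := by
      rw [Real.exp_le_one_iff]
      nlinarith
    have hE0 : (0:ℝ) < Real.exp (-(lam * t)) := Real.exp_pos _
    have h1 : |1 - Real.exp (-(lam * t))| ≤ 1 := by
      rw [abs_le]; constructor <;> nlinarith
    calc ‖g c ω lam t * (1 - Real.exp (-(lam * t)))‖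
        = |g c ω lam t| * |1 - Real.exp (-(lam * t))| := abs_mul _ _
      _ ≤ (Real.exp (c / lam) * Real.exp (-(c * t))) * 1 := by
          apply mul_le_mul (abs_g_le hc hlam0 ω t) h1 (abs_nonneg _)
          positivity
      _ ≤ Real.exp c * Real.exp (-(c * t)) := by
          rw [mul_one]
          apply mul_le_mul_of_nonneg_right _ (Real.exp_pos _).le
          exact Real.exp_le_exp.mpr (div_le_self hc.le hlam)
  · exact (expIntegrable hc).const_mul _
  · rw [ae_restrict_iff' measurableSet_Ici]
    have h0 : ∀ᵐ t : ℝ, t ≠ 0 := by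
      refine (ae_iff).mpr ?_
      simpa using Real.volume_singleton (a := 0)
    filter_upwards [h0] with t ht0 ht
    have htpos : 0 < t := lt_of_le_of_ne ht (Ne.symm ht0)
    -- exp (-(lam*t)) → 0
    have hexp0 : Tendsto (fun lam : ℝ => Real.exp (-(lam * t))) atTop (nhds 0) := by
      apply Real.tendsto_exp_atBot.comp
      apply tendsto_neg_atTop_atBot.comp
      exact Tendsto.atTop_mul_const htpos tendsto_id
    -- (exp(-(lam*t)) - 1)/lam → 0
    have hfrac : Tendsto (fun lam : ℝ => (Real.exp (-(lam * t)) - 1) / lam) atTop (nhds 0) := by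
      apply squeeze_zero_norm' _ tendsto_inv_atTop_zero
      filter_upwards [eventually_ge_atTop (1:ℝ)] with lam hlam
      have hlam0 : (0:ℝ) < lam := by linarith
      have hE : Real.exp (-(lam * t)) ≤ 1 := by
        rw [Real.exp_le_one_iff]; nlinarith
      have hE0 : (0:ℝ) < Real.exp (-(lam * t)) := Real.exp_pos _
      rw [Real.norm_eq_abs, abs_div, abs_of_pos hlam0, div_le_iff₀ hlam0]
      have hinv : lam⁻¹ * lam = 1 := inv_mul_cancel₀ hlam0.ne'
      rw [abs_le]
      constructor <;> [skip; skip] <;> rw [hinv] <;> nlinarith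
    have harg : Tendsto (fun lam : ℝ => -(c * (t + (Real.exp (-(lam * t)) - 1) / lam))) atTop
        (nhds (-(c * t))) := by
      have := ((tendsto_const_nhds (x := t)).add hfrac).const_mul c |>.neg
      simpa using this
    have hgt : Tendsto (fun lam : ℝ => g c ω lam t) atTop
        (nhds (Real.exp (-(c * t)) * Real.sin (ω * t))) := by
      unfold g
      exact ((Real.continuous_exp.continuousAt.tendsto.comp harg).mul tendsto_const_nhds)
    have hone : Tendsto (fun lam : ℝ => 1 - Real.exp (-(lam * t))) atTop (nhds 1) := by
      have := (tendsto_const_nhds (x := (1:ℝ))).sub hexp0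
      simpa using this
    have := hgt.mul hone
    simpa using this

lemma value {c ω : ℝ} (hc : 0 < c) (hω : 0 < ω) :
    ∫ t in Set.Ici (0:ℝ), Real.exp (-(c * t)) * Real.sin (ω * t) = ω / (c^2 + ω^2) := by
  have hden : (0:ℝ) < c^2 + ω^2 := by positivity
  set F : ℝ → ℝ := fun t => -(Real.exp (-(c * t)) * (c * Real.sin (ω * t) + ω * Real.cos (ω * t))) / (c^2 + ω^2)
    with hF
  have hderiv : ∀ x ∈ Set.Ici (0:ℝ), HasDerivAt F (Real.exp (-(c * x)) * Real.sin (ω * x)) x := by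
    intro x _
    have h1 : HasDerivAt (fun t : ℝ => -(c * t)) (-c) x := by
      simpa using (hasDerivAt_id x).const_mul (-c)
    have h2 : HasDerivAt (fun t : ℝ => Real.exp (-(c * t))) (Real.exp (-(c * x)) * (-c)) x :=
      h1.exp
    have h3 : HasDerivAt (fun t : ℝ => ω * t) ω x := by
      simpa using (hasDerivAt_id x).const_mul ω
    have h4 : HasDerivAt (fun t : ℝ => Real.sin (ω * t)) (Real.cos (ω * x) * ω) x := h3.sin
    have h5 : HasDerivAt (fun t : ℝ => Real.cos (ω * t)) (-Real.sin (ω * x) * ω) x := h3.cos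
    have h6 : HasDerivAt (fun t : ℝ => c * Real.sin (ω * t) + ω * Real.cos (ω * t))
        (c * (Real.cos (ω * x) * ω) + ω * (-Real.sin (ω * x) * ω)) x :=
      (h4.const_mul c).add (h5.const_mul ω)
    have h7 := ((h2.mul h6).neg).div_const (c^2 + ω^2)
    exact h7.congr_deriv ((div_eq_iff hden.ne').mpr (by ring))
  have hint : IntegrableOn (fun x => Real.exp (-(c * x)) * Real.sin (ω * x)) (Set.Ioi (0:ℝ)) := by
    apply Integrable.mono' ((expIntegrable hc).mono_set Set.Ioi_subset_Ici_self)
    · exact ((by fun_prop : Continuous fun x : ℝ => Real.exp (-(c*x)) * Real.sin (ω*x))).aestronglyMeasurable.restrict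
    · filter_upwards with x
      rw [norm_mul, Real.norm_eq_abs, Real.norm_eq_abs, abs_of_pos (Real.exp_pos _)]
      nlinarith [abs_sin_le_one (ω * x), Real.exp_pos (-(c*x)), abs_nonneg (Real.sin (ω*x))]
  have hlim : Tendsto F atTop (nhds 0) := by
    apply squeeze_zero_norm' (a := fun t => (c + ω) / (c^2 + ω^2) * Real.exp (-(c * t)))
    · filter_upwards with t
      rw [hF]
      have h1 : |c * Real.sin (ω * t) + ω * Real.cos (ω * t)| ≤ c + ω := by
        calc |c * Real.sin (ω * t) + ω * Real.cos (ω * t)|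
            ≤ |c * Real.sin (ω * t)| + |ω * Real.cos (ω * t)| := abs_add_le _ _
          _ ≤ c + ω := by
              rw [abs_mul, abs_mul, abs_of_pos hc, abs_of_pos hω]
              nlinarith [abs_sin_le_one (ω * t), abs_cos_le_one (ω * t),
                abs_nonneg (Real.sin (ω*t)), abs_nonneg (Real.cos (ω*t))]
      rw [Real.norm_eq_abs, abs_div, abs_of_pos hden, abs_neg, abs_mul,
        abs_of_pos (Real.exp_pos _), div_le_iff₀ hden]
      calc Real.exp (-(c * t)) * |c * Real.sin (ω * t) + ω * Real.cos (ω * t)|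
          ≤ Real.exp (-(c * t)) * (c + ω) := mul_le_mul_of_nonneg_left h1 (Real.exp_pos _).le
        _ = (c + ω) / (c ^ 2 + ω ^ 2) * Real.exp (-(c * t)) * (c ^ 2 + ω ^ 2) := by
            field_simp
    · have hexp0 : Tendsto (fun t : ℝ => Real.exp (-(c * t))) atTop (nhds 0) := by
        apply Real.tendsto_exp_atBot.comp
        apply tendsto_neg_atTop_atBot.comp
        exact Tendsto.const_mul_atTop hc tendsto_id
      have := hexp0.const_mul ((c + ω) / (c^2 + ω^2))
      simpa using this
  rw [integral_Ici_eq_integral_Ioi,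
    integral_Ioi_of_hasDerivAt_of_tendsto' (fun x hx => hderiv x hx) hint hlim]
  rw [hF]
  simp only [mul_zero, Real.exp_zero, Real.sin_zero, Real.cos_zero]
  field_simp
  simp


end InertiaDriftAux

/-- **Zero-mass limit of stochastic Stokes' drift with inertia.**
Let `σ, k, ω > 0` and for `lam > 0` define `C lam t := σ^2*(t + (exp (-lam*t) - 1)/lam)`.
Then the double integral
`V lam := lam * ∫₀^∞ ∫₀^∞ exp (-lam*β - (1/2)*k^2 * C lam (α+β)) * sin (ω*(α+β)) dβ dα`
converges absolutely for each `lam > 0`, and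
`V lam → ∫₀^∞ exp (-(1/2)*k^2*σ^2*α) * sin (ω*α) dα = ω / ((1/4)*k^4*σ^4 + ω^2)`
as `lam → ∞`. -/
theorem inertia_drift_zero_mass_limit
    (σ k ω : ℝ) (hσ : 0 < σ) (hk : 0 < k) (hω : 0 < ω)
    (C : ℝ → ℝ → ℝ)
    (hC : ∀ lam t, 0 < lam → 0 ≤ t →
      C lam t = σ^2 * (t + (exp (-lam * t) - 1) / lam))
    (V : ℝ → ℝ)
    (hV : ∀ lam, 0 < lam →
      V lam = lam * ∫ α in Set.Ici (0:ℝ), ∫ β in Set.Ici (0:ℝ),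
        exp (-lam * β - (1/2) * k^2 * C lam (α + β)) * sin (ω * (α + β))) :
    (∀ lam, 0 < lam →
      IntegrableOn
        (fun p : ℝ × ℝ =>
          exp (-lam * p.2 - (1/2) * k^2 * C lam (p.1 + p.2)) * sin (ω * (p.1 + p.2)))
        (Set.Ici 0 ×ˢ Set.Ici 0)) ∧
    Tendsto V atTop
      (nhds (∫ α in Set.Ici (0:ℝ), exp (-(1/2) * k^2 * σ^2 * α) * sin (ω * α))) ∧
    (∫ α in Set.Ici (0:ℝ), exp (-(1/2) * k^2 * σ^2 * α) * sin (ω * α))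
      = ω / ((1/4) * k^4 * σ^4 + ω^2) := by
  set c : ℝ := (1/2) * k^2 * σ^2 with hcdef
  have hc : 0 < c := by rw [hcdef]; positivity
  have hpt : ∀ lam, 0 < lam → ∀ x : ℝ, 0 ≤ x → ∀ β : ℝ,
      exp (-lam * β - (1/2) * k^2 * C lam x) * sin (ω * x)
        = Real.exp (-(lam * β)) * InertiaDriftAux.g c ω lam x := by
    intro lam hlam x hx β
    rw [hC lam x hlam hx, InertiaDriftAux.g]
    simp only [neg_mul]
    rw [show -(lam * β) - 1/2 * k^2 * (σ^2 * (x + (Real.exp (-(lam * x)) - 1)/lam))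
        = (-(lam*β)) + (-(c * (x + (Real.exp (-(lam * x)) - 1)/lam))) by rw [hcdef]; ring,
      Real.exp_add, mul_assoc]
  have hinteq : (∫ α in Set.Ici (0:ℝ), exp (-(1/2) * k^2 * σ^2 * α) * sin (ω * α))
      = ∫ t in Set.Ici (0:ℝ), Real.exp (-(c * t)) * Real.sin (ω * t) := by
    congr 1
    funext α
    congr 2
    rw [hcdef]; ring
  refine ⟨?_, ?_, ?_⟩
  · intro lam hlam
    refine (InertiaDriftAux.integrable2 hc hlam ω).congr_fun ?_
      (measurableSet_Ici.prod measurableSet_Ici)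
    intro p hp
    exact (hpt lam hlam (p.1 + p.2) (add_nonneg hp.1 hp.2) p.2).symm
  · rw [hinteq]
    refine Tendsto.congr' ?_ (InertiaDriftAux.limit hc ω)
    filter_upwards [eventually_gt_atTop (0:ℝ)] with lam hlam
    have e1 : (∫ α in Set.Ici (0:ℝ), ∫ β in Set.Ici (0:ℝ),
          exp (-lam * β - (1/2) * k^2 * C lam (α + β)) * sin (ω * (α + β)))
        = ∫ α in Set.Ici (0:ℝ), ∫ β in Set.Ici (0:ℝ),
          Real.exp (-(lam * β)) * InertiaDriftAux.g c ω lam (α + β) := by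
      apply setIntegral_congr_fun measurableSet_Ici
      intro α hα
      apply setIntegral_congr_fun measurableSet_Ici
      intro β hβ
      exact hpt lam hlam (α + β) (add_nonneg hα hβ) β
    rw [hV lam hlam, e1]
    exact (InertiaDriftAux.key hc hlam ω).symm
  · rw [hinteq, InertiaDriftAux.value hc hω]
    congr 1
    rw [hcdef]; ring
end
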